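/- Let y : ℤ → ℝ be a sequence of positive reals satisfying the q-Painlevé I recurrence y_{n+4} y_n (1/y_{n+2} + 1)^2 = (y_{n+3} + 1)(y_{n+1} + 1) for all n ∈ ℤ. Define c₁ := y_3 (1/y_1 + 1) / (y_0 (1/y_2 + 1)) and v_n := y_{n+2} y_{n+1}^2 y_n / (y_{n+1} + 1). Then v_{n+1} = c₁ v_n for all n ∈ ℤ. -/

import Mathlib

/-- For positive solutions of the q-Painlevé I recurrence, the quantity
`v n := y (n+2) * y (n+1)^2 * y n / (y (n+1) + 1)` satisfies `v (n+1) = c₁ * v n`,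
where `c₁ := y 3 * (1/y 1 + 1) / (y 0 * (1/y 2 + 1))`. -/
theorem qPI_v_recursion
    (y : ℤ → ℝ) (hy : ∀ n : ℤ, 0 < y n)
    (hrec : ∀ n : ℤ,
      y (n + 4) * y n * (1 / y (n + 2) + 1) ^ 2 = (y (n + 3) + 1) * (y (n + 1) + 1))
    (c₁ : ℝ) (hc₁ : c₁ = y 3 * (1 / y 1 + 1) / (y 0 * (1 / y 2 + 1)))
    (v : ℤ → ℝ) (hv : ∀ n : ℤ, v n = y (n + 2) * (y (n + 1)) ^ 2 * y n / (y (n + 1) + 1)) :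
    ∀ n : ℤ, v (n + 1) = c₁ * v n := by
  have hyne : ∀ n : ℤ, y n ≠ 0 := fun n => (hy n).ne'
  have hy1 : ∀ n : ℤ, y n + 1 ≠ 0 := fun n => by have := hy n; positivity
  have hvpos : ∀ n : ℤ, 0 < v n := by
    intro n
    rw [hv n]
    have := hy (n + 2); have := hy (n + 1); have := hy n
    positivity
  -- cleared recurrence
  have hrec' : ∀ n : ℤ, y (n + 4) * y n * (y (n + 2) + 1) ^ 2
      = (y (n + 3) + 1) * (y (n + 1) + 1) * y (n + 2) ^ 2 := by
    intro n
    have h := hrec n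
    field_simp [hyne (n + 2)] at h
    linarith [h]
  -- key identity: v (n+2) * v n = v (n+1) ^ 2
  have key : ∀ n : ℤ, v (n + 2) * v n = v (n + 1) ^ 2 := by
    intro n
    have e2 : v (n + 2) = y (n + 4) * y (n + 3) ^ 2 * y (n + 2) / (y (n + 3) + 1) := by
      have := hv (n + 2)
      rw [this]; ring_nf
    have e1 : v (n + 1) = y (n + 3) * y (n + 2) ^ 2 * y (n + 1) / (y (n + 2) + 1) := by
      have := hv (n + 1)
      rw [this]; ring_nf
    rw [e2, e1, hv n]
    have h := hrec' n
    field_simp [hy1 (n + 1), hy1 (n + 2), hy1 (n + 3)]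
    linear_combination (y (n + 3) ^ 2 * y (n + 2) ^ 2 * y (n + 1) ^ 2) * h
  -- base case
  have base : v 1 = c₁ * v 0 := by
    have h1 : v 1 = y 3 * y 2 ^ 2 * y 1 / (y 2 + 1) := by
      have := hv 1; norm_num at this; convert this using 3 <;> ring
    have h0 : v 0 = y 2 * y 1 ^ 2 * y 0 / (y 1 + 1) := by
      have := hv 0; norm_num at this; convert this using 3 <;> ring
    rw [h1, h0, hc₁]
    have hprod : y 2 * y 1 * y 0 + y 2 * y 1 ^ 2 * y 0 + y 1 * y 0 + y 1 ^ 2 * y 0 ≠ 0 := by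
      have := hy 0; have := hy 1; have := hy 2; positivity
    field_simp [hyne 0, hyne 1, hyne 2, hy1 1, hy1 2, hprod]
    rw [eq_div_iff (by have := hy 2; positivity)]; ring
  -- forward step
  have step : ∀ m : ℤ, v (m + 1) = c₁ * v m → v (m + 2) = c₁ * v (m + 1) := by
    intro m ih
    have hk := key m
    rw [ih]
    exact mul_right_cancel₀ (hvpos m).ne'
      (by rw [hk, ih]; ring)
  -- backward step
  have back : ∀ m : ℤ, v (m + 2) = c₁ * v (m + 1) → v (m + 1) = c₁ * v m := by
    intro m ih
    have hk := key m
    rw [ih] at hk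
    exact mul_right_cancel₀ (hvpos (m + 1)).ne' (by linear_combination -hk)
  intro n
  induction n using Int.induction_on with
  | zero => exact base
  | succ k ih =>
      have := step k ih
      rw [show (k : ℤ) + 1 + 1 = k + 2 by ring]
      exact this
  | pred k ih =>
      have h := back (-(k : ℤ) - 1)
      rw [show -(k : ℤ) - 1 + 2 = -k + 1 by ring, show -(k : ℤ) - 1 + 1 = -k by ring] at h
      rw [show -(k : ℤ) - 1 + 1 = -k by ring]
      exact h ih
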